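/- For all integers η, k, l ≥ 2 and every integer q ≥ 1, the generalized windmill graph of Type II satisfies Z_q(W''(η,k,l)) = η(k−1) + l. -/

import Mathlib

namespace ZqForcing

variable {V : Type*}

/-- `u` forces `v` within the allowed vertex set `A`, given the filled set `F`:
`u` is filled, `v` is its unique unfilled neighbor inside `A`. -/
def forceIn (G : SimpleGraph V) (A F : Set V) (u v : V) : Prop :=
  u ∈ A ∧ v ∈ A ∧ u ∈ F ∧ v ∉ F ∧ G.Adj u v ∧
    ∀ w ∈ A, G.Adj u w → w ∉ F → w = v

/-- One step of the standard zero forcing color change rule. -/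
def zfStep (G : SimpleGraph V) (F F' : Set V) : Prop :=
  ∃ u v, forceIn G Set.univ F u v ∧ F' = insert v F

/-- `S` is a zero forcing set: repeated color changes fill all of `V`. -/
def IsZeroForcingSet (G : SimpleGraph V) (S : Set V) : Prop :=
  Relation.ReflTransGen (zfStep G) S Set.univ

/-- The zero forcing number `Z(G)`. -/
noncomputable def zeroForcingNumber (G : SimpleGraph V) : ℕ :=
  sInf {n | ∃ S : Set V, S.ncard = n ∧ IsZeroForcingSet G S}

/-- Reachability in `G - F`, i.e. through vertices avoiding `F`. -/
def reachAvoid (G : SimpleGraph V) (F : Set V) : V → V → Prop :=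
  Relation.ReflTransGen (fun a b => G.Adj a b ∧ a ∉ F ∧ b ∉ F)

/-- The positive semidefinite color change rule: filled `u` forces unfilled `v` when `v`
is the unique neighbor of `u` in the connected component of `G - F` containing `v`. -/
def psdForce (G : SimpleGraph V) (F : Set V) (u v : V) : Prop :=
  u ∈ F ∧ v ∉ F ∧ G.Adj u v ∧
    ∀ w, G.Adj u w → w ∉ F → reachAvoid G F v w → w = v

/-- One step of the positive semidefinite color change rule. -/
def psdStep (G : SimpleGraph V) (F F' : Set V) : Prop :=
  ∃ u v, psdForce G F u v ∧ F' = insert v F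

/-- `S` is a positive semidefinite zero forcing set. -/
def IsPSDForcingSet (G : SimpleGraph V) (S : Set V) : Prop :=
  Relation.ReflTransGen (psdStep G) S Set.univ

/-- The positive semidefinite zero forcing number `Z₊(G)`. -/
noncomputable def psdZeroForcingNumber (G : SimpleGraph V) : ℕ :=
  sInf {n | ∃ S : Set V, S.ncard = n ∧ IsPSDForcingSet G S}

/-- The vertex sets of the connected components of the subgraph induced on
the unfilled vertices. -/
def unfilledComponents (G : SimpleGraph V) (F : Set V) : Set (Set V) :=
  {C | ∃ v, v ∉ F ∧ C = {w | reachAvoid G F v w}}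

/-- A forcing step performed inside the induced subgraph on the vertex set `A`. -/
def rule3Step (G : SimpleGraph V) (A F F' : Set V) : Prop :=
  ∃ u v, forceIn G A F u v ∧ F' = insert v F

/-- `ZqWinFrom G q F t`: starting from the filled set `F`, the player can guarantee to
fill all vertices using at most `t` further tokens against every oracle strategy, in the
`q`-analogue zero forcing game. -/
inductive ZqWinFrom (G : SimpleGraph V) (q : ℕ) : Set V → ℕ → Prop
  | done (t : ℕ) : ZqWinFrom G q Set.univ t
  | rule1 {F : Set V} {t : ℕ} (v : V) (hv : v ∉ F)
      (h : ZqWinFrom G q (insert v F) t) : ZqWinFrom G q F (t + 1)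
  | rule2 {F : Set V} {t : ℕ} (u v : V) (huv : forceIn G Set.univ F u v)
      (h : ZqWinFrom G q (insert v F) t) : ZqWinFrom G q F t
  | rule3 {F : Set V} {t : ℕ} (𝒞 : Set (Set V))
      (h𝒞 : 𝒞 ⊆ unfilledComponents G F) (hcard : q + 1 ≤ 𝒞.ncard)
      (next : ∀ 𝒮 : Set (Set V), 𝒮 ⊆ 𝒞 → 𝒮.Nonempty → Set V)
      (hnext : ∀ (𝒮 : Set (Set V)) (h1 : 𝒮 ⊆ 𝒞) (h2 : 𝒮.Nonempty),
        Relation.ReflTransGen (rule3Step G (F ∪ ⋃₀ 𝒮)) F (next 𝒮 h1 h2))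
      (h : ∀ (𝒮 : Set (Set V)) (h1 : 𝒮 ⊆ 𝒞) (h2 : 𝒮.Nonempty),
        ZqWinFrom G q (next 𝒮 h1 h2) t) :
      ZqWinFrom G q F t

/-- The `q`-analogue zero forcing number `Z_q(G)`. -/
noncomputable def qZeroForcingNumber (G : SimpleGraph V) (q : ℕ) : ℕ :=
  sInf {t | ZqWinFrom G q ∅ t}

/-- The induced subgraph on `B` is connected and has no cut vertex. -/
def NoCutVertex (G : SimpleGraph V) (B : Set V) : Prop :=
  (G.induce B).Connected ∧
    ∀ v ∈ B, (B \ {v}).Nonempty → (G.induce (B \ {v})).Connected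

/-- `B` is a block of `G`: a maximal (vertex set of a) connected subgraph without
a cut vertex. -/
def IsBlock (G : SimpleGraph V) (B : Set V) : Prop :=
  NoCutVertex G B ∧ ∀ B' : Set V, B ⊆ B' → NoCutVertex G B' → B' = B

/-- A block graph: a connected graph each of whose blocks is a clique. -/
def IsBlockGraph (G : SimpleGraph V) : Prop :=
  G.Connected ∧ ∀ B : Set V, IsBlock G B → G.IsClique B

/-- A cactus graph: connected, and every edge lies on at most one cycle
(cycles being identified when they have the same edge set). -/
def IsCactus (G : SimpleGraph V) : Prop :=
  G.Connected ∧ ∀ (a b : V) (c : G.Walk a a) (d : G.Walk b b),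
    c.IsCycle → d.IsCycle → ∀ e ∈ c.edges, e ∈ d.edges →
      ∀ e', e' ∈ c.edges ↔ e' ∈ d.edges

/-- `c` is an induced (chordless) cycle of `G`. -/
def IsInducedCycle (G : SimpleGraph V) {v : V} (c : G.Walk v v) : Prop :=
  c.IsCycle ∧ ∀ x ∈ c.support, ∀ y ∈ c.support, G.Adj x y → s(x, y) ∈ c.edges

/-- Generalized windmill graph of Type I: η disjoint copies of `K_k` together with
`l` central vertices forming a clique, each central vertex adjacent to everything. -/
def windmillI (η k l : ℕ) : SimpleGraph ((Fin η × Fin k) ⊕ Fin l) :=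
  SimpleGraph.fromRel (fun a b =>
    match a, b with
    | Sum.inl (i, _), Sum.inl (i', _) => i = i'
    | Sum.inr _, Sum.inr _ => True
    | _, _ => True)

/-- Generalized windmill graph of Type II: η disjoint copies of `K_k` together with
`l` pairwise nonadjacent central vertices, each adjacent to every clique vertex. -/
def windmillII (η k l : ℕ) : SimpleGraph ((Fin η × Fin k) ⊕ Fin l) :=
  SimpleGraph.fromRel (fun a b =>
    match a, b with
    | Sum.inl (i, _), Sum.inl (i', _) => i = i'
    | Sum.inr _, Sum.inr _ => False
    | _, _ => True)

/-- Generalized star (spider) graph: a center `none` together with `k` disjoint paths,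
the `i`-th of length `m i`, attached to the center at one endpoint. -/
def spider {k : ℕ} (m : Fin k → ℕ) : SimpleGraph (Option (Σ i : Fin k, Fin (m i))) :=
  SimpleGraph.fromRel (fun a b =>
    match a, b with
    | none, some ⟨_, j⟩ => j.val = 0
    | some ⟨i, j⟩, some ⟨i', j'⟩ => i = i' ∧ j.val + 1 = j'.val
    | _, _ => False)


section Windmill

variable {η k l : ℕ}

lemma wII_adj_inl_inl {i i' : Fin η} {a a' : Fin k} :
    (windmillII η k l).Adj (Sum.inl (i,a)) (Sum.inl (i',a')) ↔ i = i' ∧ a ≠ a' := by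
  simp only [windmillII, SimpleGraph.fromRel_adj, ne_eq, Sum.inl.injEq, Prod.mk.injEq]
  constructor
  · rintro ⟨h1, h2 | h2⟩ <;> subst h2 <;> exact ⟨rfl, fun h => h1 ⟨rfl, h⟩⟩
  · rintro ⟨rfl, h⟩; exact ⟨fun hh => h hh.2, Or.inl rfl⟩

lemma wII_adj_inl_inr {i : Fin η} {a : Fin k} {j : Fin l} :
    (windmillII η k l).Adj (Sum.inl (i,a)) (Sum.inr j) := by
  simp [windmillII, SimpleGraph.fromRel_adj]

lemma wII_adj_inr_inl {i : Fin η} {a : Fin k} {j : Fin l} :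
    (windmillII η k l).Adj (Sum.inr j) (Sum.inl (i,a)) :=
  wII_adj_inl_inr.symm

lemma wII_not_adj_inr_inr {j j' : Fin l} :
    ¬ (windmillII η k l).Adj (Sum.inr j) (Sum.inr j') := by
  simp [windmillII, SimpleGraph.fromRel_adj]

end Windmill
section Cap

variable {η k l : ℕ}

/-- set of incomplete cliques -/
def incSet (F : Set ((Fin η × Fin k) ⊕ Fin l)) : Set (Fin η) :=
  {i | ∃ a, Sum.inl (i,a) ∉ F}

open Classical in
noncomputable def bonus (F : Set ((Fin η × Fin k) ⊕ Fin l)) : ℕ :=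
  if (∃ j : Fin l, Sum.inr j ∉ F) ∧ (∃ i : Fin η, ∀ a : Fin k, Sum.inl (i,a) ∈ F)
  then 1 else 0

noncomputable def cap (F : Set ((Fin η × Fin k) ⊕ Fin l)) : ℕ := (incSet F).ncard + bonus F

lemma bonus_le_one (F : Set ((Fin η × Fin k) ⊕ Fin l)) : bonus F ≤ 1 := by
  unfold bonus; split <;> omega

lemma bonus_eq_one {F : Set ((Fin η × Fin k) ⊕ Fin l)}
    (h1 : ∃ j : Fin l, Sum.inr j ∉ F) (h2 : ∃ i : Fin η, ∀ a : Fin k, Sum.inl (i,a) ∈ F) :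
    bonus F = 1 := by
  unfold bonus; rw [if_pos ⟨h1, h2⟩]

lemma bonus_eq_zero_of_central {F : Set ((Fin η × Fin k) ⊕ Fin l)}
    (h : ∀ j : Fin l, Sum.inr j ∈ F) : bonus F = 0 := by
  unfold bonus
  rw [if_neg]
  rintro ⟨⟨j, hj⟩, -⟩; exact hj (h j)

lemma incSet_insert_central {F : Set ((Fin η × Fin k) ⊕ Fin l)} {j : Fin l} :
    incSet (insert (Sum.inr j) F) = incSet F := by
  ext i; simp [incSet]

/-- completing clique `i` (all of clique `i` filled but `v = inl (i,b)`) drops `cap`,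
provided all centrals are filled. -/
lemma cap_clique_complete {F : Set ((Fin η × Fin k) ⊕ Fin l)} {i : Fin η} {b : Fin k}
    (hcent : ∀ j : Fin l, Sum.inr j ∈ F)
    (hclique : ∀ a, a ≠ b → Sum.inl (i,a) ∈ F)
    (hb : Sum.inl (i,b) ∉ F) :
    cap (insert (Sum.inl (i,b)) F) + 1 ≤ cap F := by
  have hb0 : bonus F = 0 := bonus_eq_zero_of_central hcent
  have hb1 : bonus (insert (Sum.inl (i,b)) F) = 0 :=
    bonus_eq_zero_of_central (fun j => Set.mem_insert_of_mem _ (hcent j))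
  have hinc : incSet (insert (Sum.inl (i,b)) F) = incSet F \ {i} := by
    ext i'
    simp only [incSet, Set.mem_setOf_eq, Set.mem_diff, Set.mem_singleton_iff,
      Set.mem_insert_iff]
    constructor
    · rintro ⟨a, ha⟩
      push_neg at ha
      refine ⟨⟨a, ha.2⟩, ?_⟩
      rintro rfl
      rcases eq_or_ne a b with rfl | hab
      · exact ha.1 rfl
      · exact ha.2 (hclique a hab)
    · rintro ⟨⟨a, ha⟩, hne⟩
      refine ⟨a, ?_⟩
      push_neg
      refine ⟨fun h => ?_, ha⟩
      obtain ⟨h1, -⟩ := Prod.mk.injEq .. ▸ Sum.inl.injEq .. ▸ h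
      exact hne h1
  have hi : i ∈ incSet F := ⟨b, hb⟩
  have : (incSet F \ {i}).ncard + 1 = (incSet F).ncard :=
    Set.ncard_diff_singleton_add_one hi (Set.toFinite _)
  unfold cap
  rw [hinc, hb0, hb1]
  omega

/-- filling the last central, while some clique is complete, drops `cap`. -/
lemma cap_central_complete {F : Set ((Fin η × Fin k) ⊕ Fin l)} {j0 : Fin l} {i : Fin η}
    (hclique : ∀ a, Sum.inl (i,a) ∈ F)
    (hcent : ∀ j, j ≠ j0 → Sum.inr j ∈ F)
    (hj0 : Sum.inr j0 ∉ F) :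
    cap (insert (Sum.inr j0) F) + 1 ≤ cap F := by
  have hbF : bonus F = 1 := bonus_eq_one ⟨j0, hj0⟩ ⟨i, hclique⟩
  have hb1 : bonus (insert (Sum.inr j0) F) = 0 := by
    apply bonus_eq_zero_of_central
    intro j
    rcases eq_or_ne j j0 with rfl | hne
    · exact Set.mem_insert _ _
    · exact Set.mem_insert_of_mem _ (hcent j hne)
  unfold cap
  rw [incSet_insert_central, hbF, hb1]

end Cap
section Cap2

variable {η k l : ℕ}

lemma incSet_insert_subset {F : Set ((Fin η × Fin k) ⊕ Fin l)} {v} :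
    incSet (insert v F) ⊆ incSet F := by
  rintro i ⟨a, ha⟩
  exact ⟨a, fun h => ha (Set.mem_insert_of_mem _ h)⟩

/-- `cap` does not increase when one vertex is filled. -/
lemma cap_insert_le (F : Set ((Fin η × Fin k) ⊕ Fin l)) (v) :
    cap (insert v F) ≤ cap F := by
  have hmono : (incSet (insert v F)).ncard ≤ (incSet F).ncard :=
    Set.ncard_le_ncard incSet_insert_subset (Set.toFinite _)
  rcases Nat.eq_zero_or_pos (bonus (insert v F)) with h0 | h1
  · unfold cap; omega
  have hb1 : bonus (insert v F) = 1 := le_antisymm (bonus_le_one _) h1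
  have hcond : (∃ j : Fin l, Sum.inr j ∉ insert v F) ∧
      (∃ i : Fin η, ∀ a : Fin k, Sum.inl (i,a) ∈ insert v F) := by
    by_contra hc
    rw [bonus, if_neg hc] at hb1
    omega
  obtain ⟨⟨j, hj⟩, ⟨i0, hi0⟩⟩ := hcond
  have hjF : Sum.inr j ∉ F := fun h => hj (Set.mem_insert_of_mem _ h)
  by_cases hC : ∃ i : Fin η, ∀ a : Fin k, Sum.inl (i,a) ∈ F
  · have hbF : bonus F = 1 := bonus_eq_one ⟨j, hjF⟩ hC
    unfold cap; omega
  · push_neg at hC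
    obtain ⟨a0, ha0⟩ := hC i0
    have hv : v = Sum.inl (i0, a0) := by
      rcases hi0 a0 with h | h
      · exact h.symm
      · exact absurd h ha0
    have hi0F : i0 ∈ incSet F := ⟨a0, ha0⟩
    have hni : i0 ∉ incSet (insert v F) := by
      rintro ⟨a, ha⟩; exact ha (hi0 a)
    have hsub : incSet (insert v F) ⊆ incSet F \ {i0} := by
      intro i' hi'
      exact ⟨incSet_insert_subset hi', fun h => hni (h ▸ hi')⟩
    have h1 : (incSet (insert v F)).ncard ≤ (incSet F \ {i0}).ncard :=
      Set.ncard_le_ncard hsub (Set.toFinite _)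
    have h2 : (incSet F \ {i0}).ncard + 1 = (incSet F).ncard :=
      Set.ncard_diff_singleton_add_one hi0F (Set.toFinite _)
    unfold cap
    omega

/-- forcing the globally last clique vertex (all other clique vertices filled). -/
lemma cap_last_vertex (hη : 2 ≤ η) {F : Set ((Fin η × Fin k) ⊕ Fin l)} {i : Fin η} {b : Fin k}
    (hall : ∀ (i' : Fin η) (a : Fin k), (i', a) ≠ (i, b) → Sum.inl (i',a) ∈ F)
    (hb : Sum.inl (i,b) ∉ F) :
    cap (insert (Sum.inl (i,b)) F) + 1 ≤ cap F := by
  have hincF : incSet F = {i} := by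
    ext i'
    simp only [incSet, Set.mem_setOf_eq, Set.mem_singleton_iff]
    constructor
    · rintro ⟨a, ha⟩
      by_contra hne
      exact ha (hall i' a (fun h => hne (Prod.mk.injEq .. ▸ h).1))
    · rintro rfl; exact ⟨b, hb⟩
  have hincI : incSet (insert (Sum.inl (i,b)) F) = ∅ := by
    ext i'
    simp only [incSet, Set.mem_setOf_eq, Set.mem_empty_iff_false, iff_false, not_exists,
      not_not]
    intro a
    rcases eq_or_ne (i', a) (i, b) with h | h
    · rw [h]; exact Set.mem_insert _ _
    · exact Set.mem_insert_of_mem _ (hall i' a h)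
  have hbb : bonus (insert (Sum.inl (i,b)) F) ≤ bonus F := by
    rcases Nat.eq_zero_or_pos (bonus (insert (Sum.inl (i,b)) F)) with h0 | h1
    · omega
    have hb1 : bonus (insert (Sum.inl (i,b)) F) = 1 := le_antisymm (bonus_le_one _) h1
    have hcond : (∃ j : Fin l, Sum.inr j ∉ insert (Sum.inl (i,b)) F) ∧
        (∃ i0 : Fin η, ∀ a : Fin k, Sum.inl (i0,a) ∈ insert (Sum.inl (i,b)) F) := by
      by_contra hc
      rw [bonus, if_neg hc] at hb1
      omega
    obtain ⟨⟨j, hj⟩, -⟩ := hcond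
    have hjF : Sum.inr j ∉ F := fun h => hj (Set.mem_insert_of_mem _ h)
    obtain ⟨i', hi'⟩ := Fintype.exists_ne_of_one_lt_card (by rw [Fintype.card_fin]; omega) i
    have : bonus F = 1 := by
      refine bonus_eq_one ⟨j, hjF⟩ ⟨i', fun a => hall i' a ?_⟩
      intro h
      exact hi' (Prod.mk.injEq .. ▸ h).1
    omega
  unfold cap
  rw [hincF, hincI, Set.ncard_empty, Set.ncard_singleton]
  omega

end Cap2
section Comps

variable {η k l : ℕ}

lemma reach_unfilled {F : Set ((Fin η × Fin k) ⊕ Fin l)} {v w}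
    (h : reachAvoid (windmillII η k l) F v w) (hv : v ∉ F) : w ∉ F := by
  induction h with
  | refl => exact hv
  | tail _ hstep _ => exact hstep.2.2

lemma reach_symm {F : Set ((Fin η × Fin k) ⊕ Fin l)} :
    Symmetric (reachAvoid (windmillII η k l) F) :=
  fun a b h => (@Relation.ReflTransGen.stdSymm _ _ ⟨fun _ _ h => ⟨h.1.symm, h.2.2, h.2.1⟩⟩).symm a b h

/-- if all clique vertices are filled, each unfilled component is a singleton central. -/
lemma comp_of_central_filled {F : Set ((Fin η × Fin k) ⊕ Fin l)}
    (hcl : ∀ (i : Fin η) (a : Fin k), Sum.inl (i,a) ∈ F)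
    {C} (hC : C ∈ unfilledComponents (windmillII η k l) F) :
    ∃ j : Fin l, Sum.inr j ∉ F ∧ C = {Sum.inr j} := by
  obtain ⟨v, hv, rfl⟩ := hC
  obtain ⟨j, rfl⟩ : ∃ j : Fin l, v = Sum.inr j := by
    match v with
    | Sum.inl (i, a) => exact absurd (hcl i a) hv
    | Sum.inr j => exact ⟨j, rfl⟩
  refine ⟨j, hv, ?_⟩
  ext w
  simp only [Set.mem_setOf_eq, Set.mem_singleton_iff]
  constructor
  · intro h
    induction h with
    | refl => rfl
    | tail _ hstep ih =>
      subst ih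
      rename_i c _
      obtain ⟨hadj, -, hc⟩ := hstep
      match c with
      | Sum.inl (i, a) => exact absurd (hcl i a) hc
      | Sum.inr j' => exact absurd hadj wII_not_adj_inr_inr
  · rintro rfl; exact Relation.ReflTransGen.refl

/-- dichotomy: two distinct unfilled components force all centrals filled or
all clique vertices filled. -/
lemma dichotomy {F : Set ((Fin η × Fin k) ⊕ Fin l)} {𝒞 : Set (Set ((Fin η × Fin k) ⊕ Fin l))}
    (h𝒞 : 𝒞 ⊆ unfilledComponents (windmillII η k l) F) (h2 : 2 ≤ 𝒞.ncard) :
    (∀ j : Fin l, Sum.inr j ∈ F) ∨ (∀ (i : Fin η) (a : Fin k), Sum.inl (i,a) ∈ F) := by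
  by_contra hc
  push_neg at hc
  obtain ⟨⟨j0, hj0⟩, i0, a0, ha0⟩ := hc
  -- every unfilled vertex reaches the central j0
  have key : ∀ v : (Fin η × Fin k) ⊕ Fin l, v ∉ F →
      reachAvoid (windmillII η k l) F v (Sum.inr j0) := by
    intro v hv
    match v with
    | Sum.inl (i, a) =>
      exact Relation.ReflTransGen.single ⟨wII_adj_inl_inr, hv, hj0⟩
    | Sum.inr j =>
      rcases eq_or_ne j j0 with rfl | hne
      · exact Relation.ReflTransGen.refl
      · exact Relation.ReflTransGen.head ⟨wII_adj_inr_inl (i := i0) (a := a0), hv, ha0⟩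
          (Relation.ReflTransGen.single ⟨wII_adj_inl_inr, ha0, hj0⟩)
  -- hence there is only one component
  obtain ⟨C1, C2, hC1, hC2, hne⟩ := Set.one_lt_ncard_iff (Set.toFinite _) |>.mp h2
  apply hne
  obtain ⟨v1, hv1, rfl⟩ := h𝒞 hC1
  obtain ⟨v2, hv2, rfl⟩ := h𝒞 hC2
  have h12 : reachAvoid (windmillII η k l) F v1 v2 :=
    (key v1 hv1).trans (reach_symm (key v2 hv2))
  ext w
  simp only [Set.mem_setOf_eq]
  exact ⟨fun h => (reach_symm h12).trans h, fun h => h12.trans h⟩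

/-- if all centrals are filled: the unfilled part of the clique of an unfilled clique
vertex `v` lying in some component `C` is contained in `C`. -/
lemma clique_subset_comp {F : Set ((Fin η × Fin k) ⊕ Fin l)} {C} {i : Fin η} {b : Fin k}
    (hC : C ∈ unfilledComponents (windmillII η k l) F)
    (hvC : Sum.inl (i,b) ∈ C) (hv : Sum.inl (i,b) ∉ F)
    {a : Fin k} (ha : Sum.inl (i,a) ∉ F) : Sum.inl (i,a) ∈ C := by
  obtain ⟨v0, hv0, rfl⟩ := hC
  rcases eq_or_ne a b with rfl | hne
  · exact hvC
  · exact Relation.ReflTransGen.tail hvC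
      ⟨wII_adj_inl_inl.mpr ⟨rfl, fun h => hne h.symm⟩, hv, ha⟩

end Comps
section Chain

variable {η k l : ℕ}

/-- one rule-3 forcing step, when all centrals are filled: it completes a clique. -/
lemma stepQ {F F' F'' : Set ((Fin η × Fin k) ⊕ Fin l)}
    {𝒞 : Set (Set ((Fin η × Fin k) ⊕ Fin l))}
    (hcent : ∀ j : Fin l, Sum.inr j ∈ F)
    (h𝒞 : 𝒞 ⊆ unfilledComponents (windmillII η k l) F)
    (hFF' : F ⊆ F')
    (hstep : rule3Step (windmillII η k l) (F ∪ ⋃₀ 𝒞) F' F'') :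
    F' ⊆ F'' ∧ cap F'' + 1 ≤ cap F' ∧ (F'')ᶜ.ncard + 1 = (F')ᶜ.ncard := by
  obtain ⟨u, v, ⟨huA, hvA, huF, hvF, hadj, huniq⟩, rfl⟩ := hstep
  have hvnF : v ∉ F := fun h => hvF (hFF' h)
  have hvU : v ∈ ⋃₀ 𝒞 := by
    rcases hvA with h | h
    · exact absurd h hvnF
    · exact h
  obtain ⟨C, hC𝒞, hvC⟩ := hvU
  obtain ⟨i, b, rfl⟩ : ∃ (i : Fin η) (b : Fin k), v = Sum.inl (i,b) := by
    match v with
    | Sum.inl (i, a) => exact ⟨i, a, rfl⟩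
    | Sum.inr j => exact absurd (hcent j) hvnF
  -- all other vertices of clique i are in F'
  have hcl : ∀ a : Fin k, a ≠ b → Sum.inl (i,a) ∈ F' := by
    intro a hab
    by_cases haF : Sum.inl (i,a) ∈ F
    · exact hFF' haF
    · have haC : Sum.inl (i,a) ∈ C := clique_subset_comp (h𝒞 hC𝒞) hvC hvnF haF
      have haA : Sum.inl (i,a) ∈ F ∪ ⋃₀ 𝒞 := Or.inr ⟨C, hC𝒞, haC⟩
      by_contra haF'
      -- u is adjacent to inl (i,a)
      have hadj' : (windmillII η k l).Adj u (Sum.inl (i,a)) := by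
        match u with
        | Sum.inl (i', a') =>
          obtain ⟨rfl, hne⟩ := wII_adj_inl_inl.mp hadj
          rcases eq_or_ne a' a with rfl | hne'
          · exact absurd huF haF'
          · exact wII_adj_inl_inl.mpr ⟨rfl, hne'⟩
        | Sum.inr j => exact wII_adj_inr_inl
      have := huniq _ haA hadj' haF'
      rw [Sum.inl.injEq, Prod.mk.injEq] at this
      exact hab this.2
  have hcent' : ∀ j : Fin l, Sum.inr j ∈ F' := fun j => hFF' (hcent j)
  refine ⟨Set.subset_insert _ _, cap_clique_complete hcent' hcl hvF, ?_⟩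
  have : (insert (Sum.inl (i,b)) F')ᶜ = (F')ᶜ \ {Sum.inl (i,b)} := by
    ext x
    simp only [Set.mem_diff, Set.mem_compl_iff, Set.mem_insert_iff, Set.mem_singleton_iff]
    tauto
  rw [this]
  exact Set.ncard_diff_singleton_add_one hvF (Set.toFinite _)

/-- iterated rule-3 forcing, when all centrals are filled. -/
lemma chainQ {F F' : Set ((Fin η × Fin k) ⊕ Fin l)}
    {𝒞 : Set (Set ((Fin η × Fin k) ⊕ Fin l))}
    (hcent : ∀ j : Fin l, Sum.inr j ∈ F)
    (h𝒞 : 𝒞 ⊆ unfilledComponents (windmillII η k l) F)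
    (hchain : Relation.ReflTransGen (rule3Step (windmillII η k l) (F ∪ ⋃₀ 𝒞)) F F') :
    F ⊆ F' ∧ Fᶜ.ncard + cap F' ≤ cap F + (F')ᶜ.ncard := by
  induction hchain with
  | refl => exact ⟨subset_rfl, by omega⟩
  | tail _ hstep ih =>
    obtain ⟨hsub, hle⟩ := ih
    obtain ⟨hsub', hcap, hncard⟩ := stepQ hcent h𝒞 hsub hstep
    exact ⟨hsub.trans hsub', by omega⟩

/-- if all clique vertices are filled and there are ≥ 2 selected components,
no rule-3 force can happen at all. -/
lemma chainP {F F' : Set ((Fin η × Fin k) ⊕ Fin l)}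
    {𝒞 : Set (Set ((Fin η × Fin k) ⊕ Fin l))}
    (hcl : ∀ (i : Fin η) (a : Fin k), Sum.inl (i,a) ∈ F)
    (h𝒞 : 𝒞 ⊆ unfilledComponents (windmillII η k l) F) (h2 : 2 ≤ 𝒞.ncard)
    (hchain : Relation.ReflTransGen (rule3Step (windmillII η k l) (F ∪ ⋃₀ 𝒞)) F F') :
    F' = F := by
  rcases Relation.ReflTransGen.cases_head hchain with h | ⟨F1, hstep, -⟩
  · exact h.symm
  exfalso
  obtain ⟨u, v, ⟨huA, hvA, huF, hvF, hadj, huniq⟩, -⟩ := hstep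
  -- v is an unfilled vertex, hence a central in some (singleton) component
  have hvU : v ∈ ⋃₀ 𝒞 := by
    rcases hvA with h | h
    · exact absurd h hvF
    · exact h
  obtain ⟨C, hC𝒞, hvC⟩ := hvU
  -- u must be a clique vertex
  obtain ⟨j, hjF, rfl⟩ := comp_of_central_filled hcl (h𝒞 hC𝒞)
  rw [Set.mem_singleton_iff] at hvC
  subst hvC
  -- two distinct singleton central components
  obtain ⟨C1, C2, hC1, hC2, hne⟩ := Set.one_lt_ncard_iff (Set.toFinite _) |>.mp h2
  obtain ⟨j1, hj1, rfl⟩ := comp_of_central_filled hcl (h𝒞 hC1)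
  obtain ⟨j2, hj2, rfl⟩ := comp_of_central_filled hcl (h𝒞 hC2)
  have hj12 : j1 ≠ j2 := fun h => hne (by rw [h])
  obtain ⟨i0, a0, rfl⟩ : ∃ (i : Fin η) (a : Fin k), u = Sum.inl (i,a) := by
    match u with
    | Sum.inl (i, a) => exact ⟨i, a, rfl⟩
    | Sum.inr j' => exact absurd hadj wII_not_adj_inr_inr
  have e1 : (Sum.inr j1 : (Fin η × Fin k) ⊕ Fin l) = Sum.inr j :=
    huniq _ (Or.inr ⟨_, hC1, rfl⟩) wII_adj_inl_inr hj1
  have e2 : (Sum.inr j2 : (Fin η × Fin k) ⊕ Fin l) = Sum.inr j :=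
    huniq _ (Or.inr ⟨_, hC2, rfl⟩) wII_adj_inl_inr hj2
  rw [← e2] at e1
  exact hj12 (Sum.inr.injEq .. ▸ e1)

end Chain
section Lower

variable {η k l : ℕ}

/-- any global (rule 2) force drops `cap`. -/
lemma cap_force (hη : 2 ≤ η) {F : Set ((Fin η × Fin k) ⊕ Fin l)} {u v}
    (h : forceIn (windmillII η k l) Set.univ F u v) :
    cap (insert v F) + 1 ≤ cap F := by
  obtain ⟨-, -, huF, hvF, hadj, huniq⟩ := h
  have huniq' : ∀ w, (windmillII η k l).Adj u w → w ∉ F → w = v := fun w h1 h2 =>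
    huniq w (Set.mem_univ w) h1 h2
  clear huniq
  rcases v with ⟨i, b⟩ | j0 <;> rcases u with ⟨i', a⟩ | j
  · -- clique forces clique
    obtain ⟨rfl, hne⟩ := wII_adj_inl_inl.mp hadj
    have hcent : ∀ j : Fin l, Sum.inr j ∈ F := by
      intro j
      by_contra hj
      exact absurd (huniq' _ wII_adj_inl_inr hj) (by simp)
    have hcl : ∀ a' : Fin k, a' ≠ b → Sum.inl (i',a') ∈ F := by
      intro a' ha'
      rcases eq_or_ne a' a with rfl | hne'
      · exact huF
      · by_contra hF
        have := huniq' _ (wII_adj_inl_inl.mpr ⟨rfl, fun hh => hne' hh.symm⟩) hF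
        rw [Sum.inl.injEq, Prod.mk.injEq] at this
        exact ha' this.2
    exact cap_clique_complete hcent hcl hvF
  · -- central forces clique
    have hall : ∀ (i' : Fin η) (a : Fin k), (i', a) ≠ (i, b) → Sum.inl (i',a) ∈ F := by
      intro i' a hne
      by_contra hF
      have := huniq' _ (wII_adj_inr_inl) hF
      rw [Sum.inl.injEq] at this
      exact hne this
    exact cap_last_vertex hη hall hvF
  · -- clique forces central
    have hclique : ∀ a' : Fin k, Sum.inl (i',a') ∈ F := by
      intro a'
      rcases eq_or_ne a' a with rfl | hne'
      · exact huF
      · by_contra hF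
        exact absurd (huniq' _ (wII_adj_inl_inl.mpr ⟨rfl, fun hh => hne' hh.symm⟩) hF)
          (by simp)
    have hcent : ∀ j' : Fin l, j' ≠ j0 → Sum.inr j' ∈ F := by
      intro j' hne'
      by_contra hF
      have := huniq' _ wII_adj_inl_inr hF
      rw [Sum.inr.injEq] at this
      exact hne' this
    exact cap_central_complete hclique hcent hvF
  · exact absurd hadj wII_not_adj_inr_inr

/-- the main lower bound invariant. -/
lemma lower_invariant (hη : 2 ≤ η) {q : ℕ} (hq : 1 ≤ q)
    {F0 : Set ((Fin η × Fin k) ⊕ Fin l)} {t0 : ℕ}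
    (h : ZqWinFrom (windmillII η k l) q F0 t0) :
    F0ᶜ.ncard ≤ t0 + cap F0 := by
  induction h with
  | done t => simp
  | rule1 v hv h ih =>
    rename_i F t
    have h1 : (insert v F)ᶜ.ncard + 1 = Fᶜ.ncard := by
      rw [show (insert v F)ᶜ = Fᶜ \ {v} by ext x; simp [and_comm]]
      exact Set.ncard_diff_singleton_add_one (by simpa using hv) (Set.toFinite _)
    have h2 := cap_insert_le F v
    omega
  | rule2 u v huv h ih =>
    rename_i F t
    have hv : v ∉ F := huv.2.2.2.1
    have h1 : (insert v F)ᶜ.ncard + 1 = Fᶜ.ncard := by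
      rw [show (insert v F)ᶜ = Fᶜ \ {v} by ext x; simp [and_comm]]
      exact Set.ncard_diff_singleton_add_one (by simpa using hv) (Set.toFinite _)
    have h2 := cap_force hη huv
    omega
  | rule3 𝒞 h𝒞 hcard next hnext h ih =>
    rename_i F t
    have h2 : 2 ≤ 𝒞.ncard := by omega
    have hne : 𝒞.Nonempty := by
      apply Set.nonempty_of_ncard_ne_zero; omega
    have chain := hnext 𝒞 subset_rfl hne
    have IH := ih 𝒞 subset_rfl hne
    rcases dichotomy h𝒞 h2 with hcent | hcl
    · obtain ⟨-, hineq⟩ := chainQ hcent h𝒞 chain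
      omega
    · rw [chainP hcl h𝒞 h2 chain] at IH
      exact IH

end Lower
section Upper

variable {η k l : ℕ}

/-- finishing off: all centrals filled and at most one unfilled vertex per clique. -/
lemma finish (hk : 2 ≤ k) {q : ℕ} : ∀ (n : ℕ) (F : Set ((Fin η × Fin k) ⊕ Fin l)),
    Fᶜ.ncard = n → (∀ j : Fin l, Sum.inr j ∈ F) →
    (∀ (i : Fin η) (a b : Fin k), Sum.inl (i,a) ∉ F → Sum.inl (i,b) ∉ F → a = b) →
    ZqWinFrom (windmillII η k l) q F 0 := by
  intro n
  induction n with
  | zero =>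
    intro F hn _ _
    have : Fᶜ = ∅ := (Set.ncard_eq_zero (Set.toFinite _)).mp hn
    rw [Set.compl_empty_iff.mp this]
    exact ZqWinFrom.done 0
  | succ n ih =>
    intro F hn hcent hpair
    have hne : Fᶜ.Nonempty := Set.nonempty_of_ncard_ne_zero (by omega)
    obtain ⟨v, hv⟩ := hne
    rw [Set.mem_compl_iff] at hv
    rcases v with ⟨i, b⟩ | j
    · -- v = inl (i,b); force it from a filled clique mate
      obtain ⟨a, ha⟩ := Fintype.exists_ne_of_one_lt_card (by rw [Fintype.card_fin]; omega) b
      have huF : Sum.inl (i,a) ∈ F := by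
        by_contra hF
        exact ha (hpair i a b hF hv)
      have hforce : forceIn (windmillII η k l) Set.univ F (Sum.inl (i,a)) (Sum.inl (i,b)) := by
        refine ⟨Set.mem_univ _, Set.mem_univ _, huF, hv, wII_adj_inl_inl.mpr ⟨rfl, ha⟩, ?_⟩
        intro w _ hadj hw
        rcases w with ⟨i2, c⟩ | j
        · obtain ⟨rfl, -⟩ := wII_adj_inl_inl.mp hadj
          rw [Sum.inl.injEq, Prod.mk.injEq]
          exact ⟨rfl, hpair i c b hw hv⟩
        · exact absurd (hcent j) hw
      refine ZqWinFrom.rule2 _ _ hforce (ih _ ?_ ?_ ?_)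
      · rw [show (insert (Sum.inl (i,b)) F)ᶜ = Fᶜ \ {Sum.inl (i,b)} by ext x; simp [and_comm]]
        have := Set.ncard_diff_singleton_add_one (show (Sum.inl (i,b) : (Fin η × Fin k) ⊕ Fin l) ∈ Fᶜ from hv) (Set.toFinite _)
        omega
      · exact fun j => Set.mem_insert_of_mem _ (hcent j)
      · intro i' a' b' ha' hb'
        exact hpair i' a' b' (fun h => ha' (Set.mem_insert_of_mem _ h))
          (fun h => hb' (Set.mem_insert_of_mem _ h))
    · exact absurd (hcent j) hv

/-- paying for the vertices of `S` one by one. -/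
lemma buildup (hk : 2 ≤ k) {q : ℕ} : ∀ (n : ℕ) (S F : Set ((Fin η × Fin k) ⊕ Fin l)),
    (S \ F).ncard = n → (∀ j : Fin l, Sum.inr j ∈ F ∪ S) →
    (∀ (i : Fin η) (a b : Fin k), Sum.inl (i,a) ∉ F ∪ S → Sum.inl (i,b) ∉ F ∪ S → a = b) →
    ZqWinFrom (windmillII η k l) q F n := by
  intro n
  induction n with
  | zero =>
    intro S F hn hcent hpair
    have hSF : S ⊆ F := by
      rw [← Set.diff_eq_empty]
      exact (Set.ncard_eq_zero (Set.toFinite _)).mp hn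
    rw [Set.union_eq_self_of_subset_right hSF] at hcent hpair
    exact finish hk _ F rfl hcent hpair
  | succ n ih =>
    intro S F hn hcent hpair
    have hne : (S \ F).Nonempty := Set.nonempty_of_ncard_ne_zero (by omega)
    obtain ⟨v, hvS, hvF⟩ := hne
    have hunion : insert v F ∪ S = F ∪ S := by
      ext x; simp only [Set.mem_union, Set.mem_insert_iff]
      constructor
      · rintro ((rfl | h) | h)
        · exact Or.inr hvS
        · exact Or.inl h
        · exact Or.inr h
      · rintro (h | h)
        · exact Or.inl (Or.inr h)
        · exact Or.inr h
    refine ZqWinFrom.rule1 v hvF (ih S (insert v F) ?_ ?_ ?_)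
    · have : S \ insert v F = (S \ F) \ {v} := by
        ext x; simp only [Set.mem_diff, Set.mem_insert_iff, Set.mem_singleton_iff]
        tauto
      rw [this]
      have := Set.ncard_diff_singleton_add_one (show v ∈ S \ F from ⟨hvS, hvF⟩)
        (Set.toFinite _)
      omega
    · rw [hunion]; exact hcent
    · rw [hunion]; exact hpair

end Upper
/-- for `η, k, l ≥ 2` and `q ≥ 1`, `Z_q(W''(η,k,l)) = η(k-1) + l`. -/
theorem stmt13 (η k l : ℕ) (hη : 2 ≤ η) (hk : 2 ≤ k) (hl : 2 ≤ l)
    (q : ℕ) (hq : 1 ≤ q) :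
    qZeroForcingNumber (windmillII η k l) q = η * (k - 1) + l := by
  have hk1 : 0 < k := by omega
  set a0 : Fin k := ⟨0, hk1⟩ with ha0
  set S : Set ((Fin η × Fin k) ⊕ Fin l) := {x | ∀ i : Fin η, x ≠ Sum.inl (i, a0)} with hSdef
  have hmul : η * (k - 1) + η = η * k := by
    rw [← Nat.mul_succ]
    congr 1
    omega
  have hcardV : Nat.card ((Fin η × Fin k) ⊕ Fin l) = η * k + l := by simp
  -- the number of tokens for the explicit strategy
  have hSn : S.ncard = η * (k - 1) + l := by
    have hinj : Function.Injective
        (fun i : Fin η => (Sum.inl (i, a0) : (Fin η × Fin k) ⊕ Fin l)) := by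
      intro i i' h
      simpa using h
    have hS : Sᶜ = Set.range fun i : Fin η => (Sum.inl (i, a0) : (Fin η × Fin k) ⊕ Fin l) := by
      ext x
      simp only [hSdef, Set.mem_compl_iff, Set.mem_setOf_eq, Set.mem_range, not_forall, not_not]
      constructor
      · rintro ⟨i, hi⟩; exact ⟨i, hi.symm⟩
      · rintro ⟨i, hi⟩; exact ⟨i, hi.symm⟩
    have hrange : (Set.range fun i : Fin η =>
        (Sum.inl (i, a0) : (Fin η × Fin k) ⊕ Fin l)).ncard = η := by
      rw [← Set.image_univ, Set.ncard_image_of_injective _ hinj, Set.ncard_univ,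
        Nat.card_eq_fintype_card, Fintype.card_fin]
    have := Set.ncard_add_ncard_compl S (Set.toFinite _) (Set.toFinite _)
    rw [hS, hrange, hcardV] at this
    omega
  -- membership: the explicit strategy
  have hwin : ZqWinFrom (windmillII η k l) q ∅ (η * (k - 1) + l) := by
    have hcent : ∀ j : Fin l, Sum.inr j ∈ (∅ : Set ((Fin η × Fin k) ⊕ Fin l)) ∪ S := by
      intro j
      right
      intro i h
      exact absurd h (by simp)
    have hpair : ∀ (i : Fin η) (a b : Fin k),
        Sum.inl (i,a) ∉ (∅ : Set ((Fin η × Fin k) ⊕ Fin l)) ∪ S →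
        Sum.inl (i,b) ∉ (∅ : Set ((Fin η × Fin k) ⊕ Fin l)) ∪ S → a = b := by
      intro i a b ha hb
      simp only [Set.mem_union, Set.mem_empty_iff_false, false_or, hSdef,
        Set.mem_setOf_eq, not_forall, not_not] at ha hb
      obtain ⟨i1, h1⟩ := ha
      obtain ⟨i2, h2⟩ := hb
      rw [Sum.inl.injEq, Prod.mk.injEq] at h1 h2
      rw [h1.2, h2.2]
    have hb := buildup hk (q := q) (S.ncard) S ∅ (by rw [Set.diff_empty]) hcent hpair
    rwa [hSn] at hb
  -- the lower bound
  have hlow : ∀ t, ZqWinFrom (windmillII η k l) q ∅ t → η * (k - 1) + l ≤ t := by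
    intro t ht
    have hinv := lower_invariant hη hq ht
    have hcompl : (∅ : Set ((Fin η × Fin k) ⊕ Fin l))ᶜ.ncard = η * k + l := by
      rw [Set.compl_empty, Set.ncard_univ, hcardV]
    have hcap : cap (∅ : Set ((Fin η × Fin k) ⊕ Fin l)) = η := by
      have h1 : incSet (∅ : Set ((Fin η × Fin k) ⊕ Fin l)) = Set.univ :=
        Set.eq_univ_of_forall fun i => ⟨a0, Set.notMem_empty _⟩
      have h2 : bonus (∅ : Set ((Fin η × Fin k) ⊕ Fin l)) = 0 := by
        rw [bonus, if_neg]
        rintro ⟨-, i, hi⟩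
        exact Set.notMem_empty _ (hi a0)
      rw [cap, h1, h2, Set.ncard_univ, Nat.card_eq_fintype_card, Fintype.card_fin, Nat.add_zero]
    rw [hcompl, hcap] at hinv
    omega
  apply le_antisymm
  · exact Nat.sInf_le hwin
  · exact le_csInf ⟨_, hwin⟩ hlow

end ZqForcing
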